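/- Let H = Σ_k E_k |φ_k⟩⟨φ_k| be a Hamiltonian on ℂ^{d_A} ⊗ ℂ^{d_B} with nondegenerate energies and nondegenerate energy gaps (NRC: E_k + E_l = E_m + E_n implies {k,l} = {m,n}). Then the infinite-time average of G(t) = 1 − (1/d²)Tr(S_{AA'} U_t^{⊗2} S_{AA'} U_t^{†⊗2}) equals 1 − (1/d²) Σ_{χ∈{A,B}} (‖R^{(χ)}‖₂² − ½‖R_D^{(χ)}‖₂²), where R^{(χ)}_{kl} = Tr(ρ_k^{(χ)} ρ_l^{(χ)}), ρ_k^{(χ)} is the reduced density matrix of |φ_k⟩ on subsystem χ, and R_D^{(χ)} is the diagonal part of R^{(χ)}. -/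

import Mathlib

open Matrix Kronecker BigOperators Filter

noncomputable section

/-- The swap `S_{AA'}` of the two `A` factors in `(H_A ⊗ H_B)^{⊗2}`. -/
def SAA (dA dB : ℕ) :
    Matrix ((Fin dA × Fin dB) × (Fin dA × Fin dB)) ((Fin dA × Fin dB) × (Fin dA × Fin dB)) ℂ :=
  Matrix.of fun p q =>
    if p.1.1 = q.2.1 ∧ p.2.1 = q.1.1 ∧ p.1.2 = q.1.2 ∧ p.2.2 = q.2.2 then 1 else 0

/-- The bipartite OTOC `G_U = 1 − (1/d²) Tr(S_{AA'} U^{⊗2} S_{AA'} U^{†⊗2})`. -/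
def Greal (dA dB : ℕ) (U : Matrix (Fin dA × Fin dB) (Fin dA × Fin dB) ℂ) : ℝ :=
  1 - (1 / ((dA * dB : ℝ))^2) *
    (Matrix.trace (SAA dA dB * (U ⊗ₖ U) * SAA dA dB * (Uᴴ ⊗ₖ Uᴴ))).re

/-- Reduced density matrix on `A` of a pure state on `ℂ^{d_A} ⊗ ℂ^{d_B}`. -/
def rhoA (dA dB : ℕ) (ψ : Fin dA × Fin dB → ℂ) : Matrix (Fin dA) (Fin dA) ℂ :=
  Matrix.of fun a c => ∑ b : Fin dB, ψ (a, b) * star (ψ (c, b))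

/-- Reduced density matrix on `B` of a pure state on `ℂ^{d_A} ⊗ ℂ^{d_B}`. -/
def rhoB (dA dB : ℕ) (ψ : Fin dA × Fin dB → ℂ) : Matrix (Fin dB) (Fin dB) ℂ :=
  Matrix.of fun b b' => ∑ a : Fin dA, ψ (a, b) * star (ψ (a, b'))

/-- The Hamiltonian `H = Σ_k E_k |φ_k⟩⟨φ_k|`. -/
def hamOf (dA dB : ℕ) (E : Fin (dA * dB) → ℝ) (φ : Fin (dA * dB) → Fin dA × Fin dB → ℂ) :
    Matrix (Fin dA × Fin dB) (Fin dA × Fin dB) ℂ :=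
  ∑ k, (E k : ℂ) • Matrix.vecMulVec (φ k) (star (φ k))

/-- The time evolution `U_t = exp(−iHt)`. -/
def evolOf (dA dB : ℕ) (E : Fin (dA * dB) → ℝ) (φ : Fin (dA * dB) → Fin dA × Fin dB → ℂ)
    (t : ℝ) : Matrix (Fin dA × Fin dB) (Fin dA × Fin dB) ℂ :=
  NormedSpace.exp ((-(t : ℂ) * Complex.I) • hamOf dA dB E φ)


namespace OtocAux

variable {dA dB : ℕ}

theorem evol_eq (E : Fin (dA * dB) → ℝ) (φ : Fin (dA * dB) → Fin dA × Fin dB → ℂ)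
    (hortho : ∀ k l, (∑ x, star (φ k x) * φ l x) = if k = l then 1 else 0) (t : ℝ) :
    evolOf dA dB E φ t =
      ∑ k, Complex.exp (-(t : ℂ) * Complex.I * (E k)) • Matrix.vecMulVec (φ k) (star (φ k)) := by
  classical
  set ε : Fin dA × Fin dB ≃ Fin (dA * dB) := finProdFinEquiv
  set V : Matrix (Fin dA × Fin dB) (Fin dA × Fin dB) ℂ :=
    Matrix.of fun x y => φ (ε y) x with hVdef
  have hV : Vᴴ * V = 1 := by
    ext y y'
    simp only [Matrix.mul_apply, Matrix.conjTranspose_apply, hVdef, Matrix.of_apply,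
      Matrix.one_apply]
    rw [hortho (ε y) (ε y')]
    simp [ε.apply_eq_iff_eq, eq_comm]
  have hV2 : V * Vᴴ = 1 := mul_eq_one_comm.mp hV
  have hVDV : ∀ (d : Fin dA × Fin dB → ℂ) (x z : Fin dA × Fin dB),
      (V * Matrix.diagonal d * Vᴴ) x z = ∑ y, d y * (φ (ε y) x * star (φ (ε y) z)) := by
    intro d x z
    rw [Matrix.mul_apply]
    simp only [Matrix.mul_diagonal, Matrix.conjTranspose_apply, hVdef, Matrix.of_apply]
    exact Finset.sum_congr rfl fun y _ => by ring
  have hgen : ∀ c : ℂ, c • hamOf dA dB E φ =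
      V * Matrix.diagonal (fun y => c * (E (ε y) : ℂ)) * Vᴴ := by
    intro c
    ext x z
    rw [hVDV]
    simp only [hamOf, Matrix.smul_apply, Matrix.sum_apply, Matrix.smul_apply,
      Matrix.vecMulVec_apply, Pi.star_apply, smul_eq_mul]
    rw [Finset.mul_sum, ← ε.sum_comp (fun k => c * ((E k : ℂ) * (φ k x * star (φ k z))))]
    exact Finset.sum_congr rfl fun y _ => by ring
  let U : (Matrix (Fin dA × Fin dB) (Fin dA × Fin dB) ℂ)ˣ := ⟨V, Vᴴ, hV2, hV⟩
  have key : evolOf dA dB E φ t =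
      V * Matrix.diagonal (fun y => Complex.exp (-(t : ℂ) * Complex.I * (E (ε y)))) * Vᴴ := by
    rw [evolOf, hgen]
    have h1 : NormedSpace.exp
        ((U : Matrix (Fin dA × Fin dB) (Fin dA × Fin dB) ℂ) *
          Matrix.diagonal (fun y => (-(t : ℂ) * Complex.I) * (E (ε y) : ℂ)) *
          (↑U⁻¹ : Matrix (Fin dA × Fin dB) (Fin dA × Fin dB) ℂ)) =
        (U : Matrix (Fin dA × Fin dB) (Fin dA × Fin dB) ℂ) *
          NormedSpace.exp (Matrix.diagonal (fun y => (-(t : ℂ) * Complex.I) * (E (ε y) : ℂ)))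
          * (↑U⁻¹ : Matrix (Fin dA × Fin dB) (Fin dA × Fin dB) ℂ) := Matrix.exp_units_conj U _
    have h2 : NormedSpace.exp
        (Matrix.diagonal (fun y => (-(t : ℂ) * Complex.I) * (E (ε y) : ℂ))) =
        Matrix.diagonal (fun y => Complex.exp (-(t : ℂ) * Complex.I * (E (ε y)))) := by
      rw [Matrix.exp_diagonal]
      congr 1
      rw [Pi.exp_def]
      funext y
      rw [← Complex.exp_eq_exp_ℂ]
    exact h1.trans (by rw [h2]; rfl)
  rw [key]
  ext x z
  rw [hVDV]
  simp only [Matrix.sum_apply, Matrix.smul_apply, Matrix.vecMulVec_apply, Pi.star_apply,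
    smul_eq_mul]
  rw [← ε.sum_comp (fun k => Complex.exp (-(t : ℂ) * Complex.I * (E k)) * (φ k x * star (φ k z)))]


def σ (p : (Fin dA × Fin dB) × (Fin dA × Fin dB)) : (Fin dA × Fin dB) × (Fin dA × Fin dB) :=
  ((p.2.1, p.1.2), (p.1.1, p.2.2))

theorem SAA_apply' (p q : (Fin dA × Fin dB) × (Fin dA × Fin dB)) :
    SAA dA dB p q = if q = σ p then 1 else 0 := by
  rcases p with ⟨⟨a,b⟩,⟨a',b'⟩⟩
  rcases q with ⟨⟨c,d⟩,⟨c',d'⟩⟩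
  simp only [SAA, Matrix.of_apply, σ, Prod.mk.injEq]
  apply if_congr _ rfl rfl
  constructor
  · rintro ⟨h1,h2,h3,h4⟩; exact ⟨⟨h2.symm,h3.symm⟩,h1.symm,h4.symm⟩
  · rintro ⟨⟨h1,h2⟩,h3,h4⟩; exact ⟨h3.symm,h1.symm,h2.symm,h4.symm⟩

theorem SAA_mul_apply (M : Matrix ((Fin dA × Fin dB) × (Fin dA × Fin dB)) ((Fin dA × Fin dB) × (Fin dA × Fin dB)) ℂ)
    (p r : (Fin dA × Fin dB) × (Fin dA × Fin dB)) :
    (SAA dA dB * M) p r = M (σ p) r := by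
  simp [Matrix.mul_apply, SAA_apply', ite_mul, Finset.sum_ite_eq, Finset.sum_ite_eq']

theorem trace_SAA_mul (M N : Matrix ((Fin dA × Fin dB) × (Fin dA × Fin dB)) ((Fin dA × Fin dB) × (Fin dA × Fin dB)) ℂ) :
    Matrix.trace (SAA dA dB * M * SAA dA dB * N) =
      ∑ p, ∑ r, M (σ p) r * N (σ r) p := by
  have h : SAA dA dB * M * SAA dA dB * N = (SAA dA dB * M) * (SAA dA dB * N) := by
    rw [Matrix.mul_assoc (SAA dA dB * M)]
  rw [h]
  have h2 : ∀ p r, (SAA dA dB * M) p r * (SAA dA dB * N) r p = M (σ p) r * N (σ r) p := by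
    intro p r; rw [SAA_mul_apply, SAA_mul_apply]
  simp only [Matrix.trace, Matrix.diag, Matrix.mul_apply]
  exact Finset.sum_congr rfl fun p _ => Finset.sum_congr rfl fun r _ => h2 p r

/-! ### sum shuffles -/

variable {M' : Type*} [AddCommMonoid M']

theorem sum_comm3 {α β γ : Type*} [Fintype α] [Fintype β] [Fintype γ]
    (f : α → β → γ → M') :
    ∑ a, ∑ b, ∑ c, f a b c = ∑ c, ∑ a, ∑ b, f a b c := by
  calc ∑ a, ∑ b, ∑ c, f a b c = ∑ a, ∑ c, ∑ b, f a b c :=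
        Finset.sum_congr rfl fun a _ => Finset.sum_comm
    _ = ∑ c, ∑ a, ∑ b, f a b c := Finset.sum_comm

theorem sum_comm4_13 {α β γ δ : Type*} [Fintype α] [Fintype β] [Fintype γ] [Fintype δ]
    (f : α → β → γ → δ → M') :
    ∑ a, ∑ b, ∑ c, ∑ d, f a b c d = ∑ c, ∑ a, ∑ b, ∑ d, f a b c d := by
  calc ∑ a, ∑ b, ∑ c, ∑ d, f a b c d = ∑ a, ∑ c, ∑ b, ∑ d, f a b c d :=
        Finset.sum_congr rfl fun a _ => Finset.sum_comm
    _ = ∑ c, ∑ a, ∑ b, ∑ d, f a b c d := Finset.sum_comm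

theorem sum_comm4_23 {α β γ δ : Type*} [Fintype α] [Fintype β] [Fintype γ] [Fintype δ]
    (f : α → β → γ → δ → M') :
    ∑ a, ∑ b, ∑ c, ∑ d, f a b c d = ∑ a, ∑ c, ∑ b, ∑ d, f a b c d :=
  Finset.sum_congr rfl fun a _ => Finset.sum_comm

theorem sum_comm4_pairs {α β γ δ : Type*} [Fintype α] [Fintype β] [Fintype γ] [Fintype δ]
    (f : α → β → γ → δ → M') :
    ∑ a, ∑ b, ∑ c, ∑ d, f a b c d = ∑ c, ∑ d, ∑ a, ∑ b, f a b c d := by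
  rw [sum_comm4_13]
  exact Finset.sum_congr rfl fun c _ => sum_comm3 _

/-! ### reduced density matrices -/

def rA (φ : Fin (dA * dB) → Fin dA × Fin dB → ℂ) (k m : Fin (dA * dB)) :
    Matrix (Fin dA) (Fin dA) ℂ :=
  Matrix.of fun a c => ∑ b : Fin dB, φ k (a, b) * star (φ m (c, b))

def rB' (φ : Fin (dA * dB) → Fin dA × Fin dB → ℂ) (k : Fin (dA * dB)) :
    Matrix (Fin dB) (Fin dB) ℂ :=
  Matrix.of fun b b' => ∑ a : Fin dA, φ k (a, b) * star (φ k (a, b'))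

def T1 (φ : Fin (dA * dB) → Fin dA × Fin dB → ℂ) (k l m n : Fin (dA * dB)) : ℂ :=
  Matrix.trace (rA φ k m * rA φ l n)

def Pm (φ : Fin (dA * dB) → Fin dA × Fin dB → ℂ) (k : Fin (dA * dB)) :
    Matrix (Fin dA × Fin dB) (Fin dA × Fin dB) ℂ :=
  Matrix.vecMulVec (φ k) (star (φ k))

theorem tau_eq (φ : Fin (dA * dB) → Fin dA × Fin dB → ℂ) (k l m n : Fin (dA * dB)) :
    Matrix.trace (SAA dA dB * (Pm φ k ⊗ₖ Pm φ l) * SAA dA dB * (Pm φ m ⊗ₖ Pm φ n)) =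
      T1 φ k l m n * star (T1 φ k l m n) := by
  rw [trace_SAA_mul]
  have hterm : ∀ p r : (Fin dA × Fin dB) × (Fin dA × Fin dB),
      (Pm φ k ⊗ₖ Pm φ l) (σ p) r * (Pm φ m ⊗ₖ Pm φ n) (σ r) p =
      (φ k (σ p).1 * φ l (σ p).2 * star (φ m p.1) * star (φ n p.2)) *
      (star (φ k r.1) * star (φ l r.2) * φ m (σ r).1 * φ n (σ r).2) := by
    intro p r
    simp only [Matrix.kroneckerMap_apply, Pm, Matrix.vecMulVec_apply, Pi.star_apply, σ]
    ring
  calc ∑ p, ∑ r, (Pm φ k ⊗ₖ Pm φ l) (σ p) r * (Pm φ m ⊗ₖ Pm φ n) (σ r) p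
      = (∑ p : (Fin dA × Fin dB) × (Fin dA × Fin dB),
          φ k (σ p).1 * φ l (σ p).2 * star (φ m p.1) * star (φ n p.2)) *
        (∑ r : (Fin dA × Fin dB) × (Fin dA × Fin dB),
          star (φ k r.1) * star (φ l r.2) * φ m (σ r).1 * φ n (σ r).2) := by
        rw [Finset.sum_mul_sum]
        exact Finset.sum_congr rfl fun p _ => Finset.sum_congr rfl fun r _ => hterm p r
    _ = T1 φ k l m n * star (T1 φ k l m n) := by
        congr 1
        · -- first factor = T1
          rw [Fintype.sum_prod_type]
          simp only [Fintype.sum_prod_type, σ]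
          rw [sum_comm4_13]
          simp only [T1, Matrix.trace, Matrix.diag, Matrix.mul_apply, rA, Matrix.of_apply,
            Finset.sum_mul_sum]
          exact Finset.sum_congr rfl fun a' _ => Finset.sum_congr rfl fun a _ =>
            Finset.sum_congr rfl fun b _ => Finset.sum_congr rfl fun b' _ => by ring
        · -- second factor = star T1
          rw [Fintype.sum_prod_type]
          simp only [Fintype.sum_prod_type, σ]
          rw [sum_comm4_23]
          simp only [T1, Matrix.trace, Matrix.diag, Matrix.mul_apply, rA, Matrix.of_apply,
            star_sum, star_mul', Finset.sum_mul_sum]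
          exact Finset.sum_congr rfl fun a' _ => Finset.sum_congr rfl fun a _ =>
            Finset.sum_congr rfl fun b _ => Finset.sum_congr rfl fun b' _ => by
              simp only [star_mul', star_star]; ring


theorem Pm_herm (φ : Fin (dA * dB) → Fin dA × Fin dB → ℂ) (k : Fin (dA * dB)) :
    (Pm φ k)ᴴ = Pm φ k := by
  ext x y
  simp only [Pm, Matrix.conjTranspose_apply, Matrix.vecMulVec_apply, Pi.star_apply, star_mul',
    star_star]
  ring

theorem kron_expand (φ : Fin (dA * dB) → Fin dA × Fin dB → ℂ) (c : Fin (dA * dB) → ℂ) :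
    ((∑ k, c k • Pm φ k) ⊗ₖ (∑ l, c l • Pm φ l)) =
      ∑ k, ∑ l, (c k * c l) • (Pm φ k ⊗ₖ Pm φ l) := by
  ext p q
  simp only [Matrix.kroneckerMap_apply, Matrix.sum_apply, Matrix.smul_apply, smul_eq_mul,
    Finset.sum_mul_sum]
  exact Finset.sum_congr rfl fun k _ => Finset.sum_congr rfl fun l _ => by ring

theorem conjT_expand (φ : Fin (dA * dB) → Fin dA × Fin dB → ℂ) (c : Fin (dA * dB) → ℂ) :
    (∑ k, c k • Pm φ k)ᴴ = ∑ k, star (c k) • Pm φ k := by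
  rw [Matrix.conjTranspose_sum]
  exact Finset.sum_congr rfl fun k _ => by rw [Matrix.conjTranspose_smul, Pm_herm]

theorem trace_expand (φ : Fin (dA * dB) → Fin dA × Fin dB → ℂ)
    (α β : Fin (dA * dB) → Fin (dA * dB) → ℂ) :
    Matrix.trace (SAA dA dB * (∑ k, ∑ l, α k l • (Pm φ k ⊗ₖ Pm φ l)) * SAA dA dB *
        (∑ m, ∑ n, β m n • (Pm φ m ⊗ₖ Pm φ n))) =
      ∑ k, ∑ l, ∑ m, ∑ n, (α k l * β m n) * (T1 φ k l m n * star (T1 φ k l m n)) := by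
  simp only [Matrix.mul_sum, Matrix.sum_mul, Matrix.mul_smul, Matrix.smul_mul,
    Matrix.trace_sum, Matrix.trace_smul, smul_eq_mul, smul_smul]
  conv_rhs => rw [sum_comm4_pairs (fun k l m n =>
    (α k l * β m n) * (T1 φ k l m n * star (T1 φ k l m n)))]
  refine Finset.sum_congr rfl fun m _ => Finset.sum_congr rfl fun n _ => ?_
  rw [Finset.mul_sum]
  refine Finset.sum_congr rfl fun k _ => ?_
  rw [Finset.mul_sum]
  refine Finset.sum_congr rfl fun l _ => ?_
  rw [tau_eq]
  ring


theorem rA_conjT (φ : Fin (dA * dB) → Fin dA × Fin dB → ℂ) (k m : Fin (dA * dB)) :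
    (rA φ k m)ᴴ = rA φ m k := by
  ext a c
  simp only [rA, Matrix.conjTranspose_apply, Matrix.of_apply, star_sum, star_mul', star_star]
  exact Finset.sum_congr rfl fun b _ => by ring

theorem rB'_herm (φ : Fin (dA * dB) → Fin dA × Fin dB → ℂ) (k : Fin (dA * dB)) :
    (rB' φ k)ᴴ = rB' φ k := by
  ext b b'
  simp only [rB', Matrix.conjTranspose_apply, Matrix.of_apply, star_sum, star_mul', star_star]
  exact Finset.sum_congr rfl fun a _ => by ring

theorem T1_pair_real (φ : Fin (dA * dB) → Fin dA × Fin dB → ℂ) (k l : Fin (dA * dB)) :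
    (T1 φ k l k l).im = 0 := by
  have h : star (T1 φ k l k l) = T1 φ k l k l := by
    rw [T1, ← Matrix.trace_conjTranspose, Matrix.conjTranspose_mul, rA_conjT, rA_conjT,
      Matrix.trace_mul_comm]
  have := congrArg Complex.im h
  simp only [Complex.star_def, Complex.conj_im] at this
  linarith

theorem trace_rB_real (φ : Fin (dA * dB) → Fin dA × Fin dB → ℂ) (k l : Fin (dA * dB)) :
    (Matrix.trace (rB' φ k * rB' φ l)).im = 0 := by
  have h : star (Matrix.trace (rB' φ k * rB' φ l)) = Matrix.trace (rB' φ k * rB' φ l) := by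
    rw [← Matrix.trace_conjTranspose, Matrix.conjTranspose_mul, rB'_herm, rB'_herm,
      Matrix.trace_mul_comm]
  have := congrArg Complex.im h
  simp only [Complex.star_def, Complex.conj_im] at this
  linarith

theorem T1_swap_eq_B (φ : Fin (dA * dB) → Fin dA × Fin dB → ℂ) (k l : Fin (dA * dB)) :
    T1 φ k l l k = Matrix.trace (rB' φ k * rB' φ l) := by
  have lhs : T1 φ k l l k = ∑ a, ∑ a', ∑ b, ∑ b',
      (φ k (a,b) * star (φ l (a',b))) * (φ l (a',b') * star (φ k (a,b'))) := by
    simp only [T1, Matrix.trace, Matrix.diag, Matrix.mul_apply, rA, Matrix.of_apply,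
      Finset.sum_mul_sum]
  have rhs : Matrix.trace (rB' φ k * rB' φ l) = ∑ b, ∑ b', ∑ a, ∑ a',
      (φ k (a,b) * star (φ k (a,b'))) * (φ l (a',b') * star (φ l (a',b))) := by
    simp only [Matrix.trace, Matrix.diag, Matrix.mul_apply, rB', Matrix.of_apply,
      Finset.sum_mul_sum]
  rw [lhs, rhs, sum_comm4_pairs (fun a a' b b' =>
    (φ k (a,b) * star (φ l (a',b))) * (φ l (a',b') * star (φ k (a,b'))))]
  exact Finset.sum_congr rfl fun b _ => Finset.sum_congr rfl fun b' _ =>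
    Finset.sum_congr rfl fun a _ => Finset.sum_congr rfl fun a' _ => by ring


theorem sum_ite_pair {γ : Type*} [AddCommMonoid γ] {α β : Type*} [Fintype α] [Fintype β]
    [DecidableEq α] [DecidableEq β] (k : α) (l : β) (f : α → β → γ) :
    (∑ m, ∑ n, if (m = k ∧ n = l) then f m n else 0) = f k l := by
  rw [Finset.sum_eq_single k]
  · rw [Finset.sum_eq_single l]
    · simp
    · intro n _ hn; rw [if_neg]; rintro ⟨_, rfl⟩; exact hn rfl
    · intro h; exact absurd (Finset.mem_univ l) h
  · intro m _ hm; apply Finset.sum_eq_zero; intro n _; rw [if_neg]; rintro ⟨rfl, _⟩; exact hm rfl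
  · intro h; exact absurd (Finset.mem_univ k) h

theorem Greal_eq (E : Fin (dA * dB) → ℝ) (φ : Fin (dA * dB) → Fin dA × Fin dB → ℂ)
    (hortho : ∀ k l, (∑ x, star (φ k x) * φ l x) = if k = l then 1 else 0) (t : ℝ) :
    Greal dA dB (evolOf dA dB E φ t) = 1 - (1 / ((dA * dB : ℝ))^2) *
      ∑ k, ∑ l, ∑ m, ∑ n, Complex.normSq (T1 φ k l m n) *
        Real.cos ((E k + E l - E m - E n) * t) := by
  have hU := evol_eq E φ hortho t
  have hPm : ∀ k : Fin (dA * dB), Matrix.vecMulVec (φ k) (star (φ k)) = Pm φ k := fun _ => rfl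
  simp only [Greal]
  rw [hU]
  simp only [hPm]
  rw [conjT_expand, kron_expand, kron_expand, trace_expand]
  congr 2
  rw [Complex.re_sum]
  refine Finset.sum_congr rfl fun k _ => ?_
  rw [Complex.re_sum]
  refine Finset.sum_congr rfl fun l _ => ?_
  rw [Complex.re_sum]
  refine Finset.sum_congr rfl fun m _ => ?_
  rw [Complex.re_sum]
  refine Finset.sum_congr rfl fun n _ => ?_
  -- per-term computation
  have hsm : ∀ s : Fin (dA * dB),
      star (Complex.exp (-(t : ℂ) * Complex.I * (E s))) =
        Complex.exp ((t : ℂ) * Complex.I * (E s)) := by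
    intro s
    have hc : (starRingEnd ℂ) (-(t : ℂ) * Complex.I * (E s)) =
        (t : ℂ) * Complex.I * (E s) := by
      simp only [_root_.map_mul, map_neg, Complex.conj_I, Complex.conj_ofReal]
      ring
    calc star (Complex.exp (-(t : ℂ) * Complex.I * (E s)))
        = (starRingEnd ℂ) (Complex.exp (-(t : ℂ) * Complex.I * (E s))) := rfl
      _ = Complex.exp ((starRingEnd ℂ) (-(t : ℂ) * Complex.I * (E s))) :=
          (Complex.exp_conj _).symm
      _ = Complex.exp ((t : ℂ) * Complex.I * (E s)) := by rw [hc]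
  have hT : T1 φ k l m n * star (T1 φ k l m n) = (Complex.normSq (T1 φ k l m n) : ℂ) := by
    have : star (T1 φ k l m n) = (starRingEnd ℂ) (T1 φ k l m n) := rfl
    rw [this, Complex.mul_conj]
  rw [hsm, hsm, hT]
  rw [← Complex.exp_add, ← Complex.exp_add, ← Complex.exp_add]
  have hang : (-(t : ℂ) * Complex.I * (E k) + -(t : ℂ) * Complex.I * (E l) +
      ((t : ℂ) * Complex.I * (E m) + (t : ℂ) * Complex.I * (E n))) =
      ((-((E k + E l - E m - E n) * t) : ℝ) : ℂ) * Complex.I := by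
    push_cast
    ring
  rw [hang, mul_comm (Complex.exp _)]
  rw [Complex.re_ofReal_mul, Complex.exp_ofReal_mul_I_re, Real.cos_neg]


theorem avg_cos (c ω : ℝ) :
    Filter.Tendsto (fun T : ℝ => (1 / T) * ∫ t in (0:ℝ)..T, c * Real.cos (ω * t))
      Filter.atTop (nhds (if ω = 0 then c else 0)) := by
  by_cases hω : ω = 0
  · subst hω
    simp only [if_pos rfl, zero_mul, Real.cos_zero, mul_one,
      intervalIntegral.integral_const, smul_eq_mul, sub_zero]
    have h : (fun T : ℝ => (1 / T) * (T * c)) =ᶠ[atTop] fun _ => c := by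
      filter_upwards [Filter.eventually_gt_atTop (0:ℝ)] with T hT
      field_simp
    exact Filter.Tendsto.congr' h.symm tendsto_const_nhds
  · have hInt : ∀ T : ℝ, (∫ t in (0:ℝ)..T, c * Real.cos (ω * t)) =
        c * (Real.sin (ω * T) / ω) := by
      intro T
      rw [intervalIntegral.integral_const_mul]
      congr 1
      rw [intervalIntegral.integral_comp_mul_left (fun x => Real.cos x) hω]
      simp [integral_cos, div_eq_inv_mul]
    simp only [hInt, if_neg hω]
    have hb : Filter.Tendsto (fun T : ℝ => (|c| / |ω|) * (1 / T)) atTop (nhds 0) := by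
      have h0 : Filter.Tendsto (fun T : ℝ => T⁻¹) atTop (nhds 0) := tendsto_inv_atTop_zero
      simpa [one_div] using h0.const_mul (|c| / |ω|)
    apply squeeze_zero_norm' _ hb
    filter_upwards [Filter.eventually_gt_atTop (0:ℝ)] with T hT
    have hs : |Real.sin (ω * T)| ≤ 1 :=
      abs_le.mpr ⟨Real.neg_one_le_sin _, Real.sin_le_one _⟩
    have hω' : 0 < |ω| := abs_pos.mpr hω
    rw [Real.norm_eq_abs, abs_mul, abs_mul, abs_div, abs_one, abs_of_pos hT, abs_div]
    have key : |c| * (|Real.sin (ω * T)| / |ω|) ≤ |c| / |ω| := by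
      rw [mul_div_assoc']
      gcongr
      nlinarith [abs_nonneg c]
    rw [mul_comm (|c| / |ω|) (1 / T)]
    exact mul_le_mul_of_nonneg_left key (by positivity)

end OtocAux

open OtocAux Filter

/-- For a Hamiltonian with nondegenerate energies and nondegenerate gaps (NRC), the
infinite-time average of the bipartite OTOC equals
`1 − (1/d²) Σ_{χ∈{A,B}} (‖R^{(χ)}‖₂² − ½‖R_D^{(χ)}‖₂²)` where
`R^{(χ)}_{kl} = Tr(ρ_k^{(χ)} ρ_l^{(χ)})`. -/
theorem otoc_time_average_NRC (dA dB : ℕ) (hA : 0 < dA) (hB : 0 < dB)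
    (E : Fin (dA * dB) → ℝ) (φ : Fin (dA * dB) → Fin dA × Fin dB → ℂ)
    (hortho : ∀ k l, (∑ x, star (φ k x) * φ l x) = if k = l then 1 else 0)
    (hNRC : ∀ k l m n, E k + E l = E m + E n → (k = m ∧ l = n) ∨ (k = n ∧ l = m)) :
    Filter.Tendsto
      (fun T : ℝ => (1 / T) * ∫ t in (0 : ℝ)..T, Greal dA dB (evolOf dA dB E φ t))
      Filter.atTop
      (nhds (1 - (1 / ((dA * dB : ℝ))^2) *
        (((∑ k, ∑ l, ((Matrix.trace (rhoA dA dB (φ k) * rhoA dA dB (φ l))).re)^2) -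
            (1/2) * ∑ k, ((Matrix.trace (rhoA dA dB (φ k) * rhoA dA dB (φ k))).re)^2) +
         ((∑ k, ∑ l, ((Matrix.trace (rhoB dA dB (φ k) * rhoB dA dB (φ l))).re)^2) -
            (1/2) * ∑ k, ((Matrix.trace (rhoB dA dB (φ k) * rhoB dA dB (φ k))).re)^2)))) := by
  classical
  -- flattened form of the OTOC
  have hG : ∀ t : ℝ, Greal dA dB (evolOf dA dB E φ t) = 1 - (1 / ((dA * dB : ℝ))^2) *
      ∑ q : Fin (dA*dB) × Fin (dA*dB) × Fin (dA*dB) × Fin (dA*dB),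
        Complex.normSq (T1 φ q.1 q.2.1 q.2.2.1 q.2.2.2) *
          Real.cos ((E q.1 + E q.2.1 - E q.2.2.1 - E q.2.2.2) * t) := by
    intro t
    rw [Greal_eq E φ hortho t]
    simp only [Fintype.sum_prod_type]
  have hint : ∀ (q : Fin (dA*dB) × Fin (dA*dB) × Fin (dA*dB) × Fin (dA*dB)) (T : ℝ),
      IntervalIntegrable (fun t : ℝ => Complex.normSq (T1 φ q.1 q.2.1 q.2.2.1 q.2.2.2) *
        Real.cos ((E q.1 + E q.2.1 - E q.2.2.1 - E q.2.2.2) * t))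
        MeasureTheory.volume 0 T := by
    intro q T
    exact Continuous.intervalIntegrable
      (continuous_const.mul (Real.continuous_cos.comp (continuous_const.mul continuous_id))) 0 T
  have heq : ∀ T : ℝ, (1/T) * ∫ t in (0:ℝ)..T, Greal dA dB (evolOf dA dB E φ t) =
      (1/T) * T - (1/((dA*dB:ℝ))^2) *
        ∑ q : Fin (dA*dB) × Fin (dA*dB) × Fin (dA*dB) × Fin (dA*dB),
          ((1/T) * ∫ t in (0:ℝ)..T, Complex.normSq (T1 φ q.1 q.2.1 q.2.2.1 q.2.2.2) *
            Real.cos ((E q.1 + E q.2.1 - E q.2.2.1 - E q.2.2.2) * t)) := by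
    intro T
    have h1 : (∫ t in (0:ℝ)..T, Greal dA dB (evolOf dA dB E φ t)) =
        ∫ t in (0:ℝ)..T, ((1:ℝ) - (1/((dA*dB:ℝ))^2) *
          ∑ q : Fin (dA*dB) × Fin (dA*dB) × Fin (dA*dB) × Fin (dA*dB),
            Complex.normSq (T1 φ q.1 q.2.1 q.2.2.1 q.2.2.2) *
              Real.cos ((E q.1 + E q.2.1 - E q.2.2.1 - E q.2.2.2) * t)) :=
      intervalIntegral.integral_congr (fun t _ => hG t)
    have hsum : IntervalIntegrable (fun t : ℝ =>
        ∑ q : Fin (dA*dB) × Fin (dA*dB) × Fin (dA*dB) × Fin (dA*dB),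
          Complex.normSq (T1 φ q.1 q.2.1 q.2.2.1 q.2.2.2) *
            Real.cos ((E q.1 + E q.2.1 - E q.2.2.1 - E q.2.2.2) * t))
        MeasureTheory.volume 0 T := by
      apply Continuous.intervalIntegrable
      exact continuous_finset_sum _ fun q _ =>
        continuous_const.mul (Real.continuous_cos.comp (continuous_const.mul continuous_id))
    rw [h1, intervalIntegral.integral_sub intervalIntegrable_const (hsum.const_mul _),
      intervalIntegral.integral_const_mul,
      intervalIntegral.integral_finset_sum (fun q _ => hint q T),
      intervalIntegral.integral_const]
    simp only [smul_eq_mul, sub_zero, mul_one]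
    rw [← Finset.mul_sum]
    ring
  have hlim1 : Tendsto (fun T : ℝ => (1/T) * T) atTop (nhds 1) := by
    have h : (fun T : ℝ => (1/T) * T) =ᶠ[atTop] fun _ => (1:ℝ) := by
      filter_upwards [Filter.eventually_gt_atTop (0:ℝ)] with T hT
      field_simp
    exact Filter.Tendsto.congr' h.symm tendsto_const_nhds
  have hlim : Tendsto (fun T : ℝ => (1/T) * T - (1/((dA*dB:ℝ))^2) *
      ∑ q : Fin (dA*dB) × Fin (dA*dB) × Fin (dA*dB) × Fin (dA*dB),
        ((1/T) * ∫ t in (0:ℝ)..T, Complex.normSq (T1 φ q.1 q.2.1 q.2.2.1 q.2.2.2) *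
          Real.cos ((E q.1 + E q.2.1 - E q.2.2.1 - E q.2.2.2) * t))) atTop
      (nhds (1 - (1/((dA*dB:ℝ))^2) *
        ∑ q : Fin (dA*dB) × Fin (dA*dB) × Fin (dA*dB) × Fin (dA*dB),
          (if (E q.1 + E q.2.1 - E q.2.2.1 - E q.2.2.2) = 0 then
            Complex.normSq (T1 φ q.1 q.2.1 q.2.2.1 q.2.2.2) else 0))) := by
    exact hlim1.sub (Filter.Tendsto.const_mul _
      (tendsto_finset_sum _ fun q _ => avg_cos _ _))
  have hmain := hlim.congr (fun T => (heq T).symm)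
  -- identify the limit value
  have hcond : ∀ k l m n : Fin (dA*dB),
      ((E k + E l - E m - E n = 0) ↔ ((m = k ∧ n = l) ∨ (m = l ∧ n = k))) := by
    intro k l m n
    constructor
    · intro h
      rcases hNRC k l m n (by linarith) with ⟨h1, h2⟩ | ⟨h1, h2⟩
      · exact Or.inl ⟨h1.symm, h2.symm⟩
      · exact Or.inr ⟨h2.symm, h1.symm⟩
    · rintro (⟨rfl, rfl⟩ | ⟨rfl, rfl⟩) <;> ring
  have hAkl : ∀ k l, Complex.normSq (T1 φ k l k l) =
      ((Matrix.trace (rhoA dA dB (φ k) * rhoA dA dB (φ l))).re)^2 := by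
    intro k l
    have h0 : Matrix.trace (rhoA dA dB (φ k) * rhoA dA dB (φ l)) = T1 φ k l k l := rfl
    rw [h0, Complex.normSq_apply, T1_pair_real φ k l]
    ring
  have hBkl : ∀ k l, Complex.normSq (T1 φ k l l k) =
      ((Matrix.trace (rhoB dA dB (φ k) * rhoB dA dB (φ l))).re)^2 := by
    intro k l
    have h0 : Matrix.trace (rhoB dA dB (φ k) * rhoB dA dB (φ l)) =
        Matrix.trace (rB' φ k * rB' φ l) := rfl
    have him : (T1 φ k l l k).im = 0 := by
      rw [T1_swap_eq_B]; exact trace_rB_real φ k l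
    rw [h0, ← T1_swap_eq_B, Complex.normSq_apply, him]
    ring
  have hDk : ∀ k, Complex.normSq (T1 φ k k k k) =
      (1/2) * ((Matrix.trace (rhoA dA dB (φ k) * rhoA dA dB (φ k))).re)^2 +
      (1/2) * ((Matrix.trace (rhoB dA dB (φ k) * rhoB dA dB (φ k))).re)^2 := by
    intro k
    have h1 := hAkl k k
    have h2 := hBkl k k
    linarith
  have hval : (∑ q : Fin (dA*dB) × Fin (dA*dB) × Fin (dA*dB) × Fin (dA*dB),
      (if (E q.1 + E q.2.1 - E q.2.2.1 - E q.2.2.2) = 0 then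
        Complex.normSq (T1 φ q.1 q.2.1 q.2.2.1 q.2.2.2) else 0)) =
      (((∑ k, ∑ l, ((Matrix.trace (rhoA dA dB (φ k) * rhoA dA dB (φ l))).re)^2) -
          (1/2) * ∑ k, ((Matrix.trace (rhoA dA dB (φ k) * rhoA dA dB (φ k))).re)^2) +
       ((∑ k, ∑ l, ((Matrix.trace (rhoB dA dB (φ k) * rhoB dA dB (φ l))).re)^2) -
          (1/2) * ∑ k, ((Matrix.trace (rhoB dA dB (φ k) * rhoB dA dB (φ k))).re)^2)) := by
    simp only [Fintype.sum_prod_type]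
    have hsplit : ∀ k l, (∑ m, ∑ n, if (E k + E l - E m - E n = 0) then
        Complex.normSq (T1 φ k l m n) else 0) =
        Complex.normSq (T1 φ k l k l) + Complex.normSq (T1 φ k l l k) -
          (if k = l then Complex.normSq (T1 φ k l k l) else 0) := by
      intro k l
      have e1 : ∀ m n, (if (E k + E l - E m - E n = 0) then
          Complex.normSq (T1 φ k l m n) else 0) =
          (if (m = k ∧ n = l) then Complex.normSq (T1 φ k l m n) else 0) +
          (if (m = l ∧ n = k) then Complex.normSq (T1 φ k l m n) else 0) -
          (if ((m = k ∧ n = l) ∧ (m = l ∧ n = k)) then Complex.normSq (T1 φ k l m n) else 0) := by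
        intro m n
        by_cases h1 : (m = k ∧ n = l) <;> by_cases h2 : (m = l ∧ n = k) <;>
          simp [h1, h2, hcond k l m n]
      simp only [e1]
      simp only [Finset.sum_sub_distrib, Finset.sum_add_distrib]
      have s1 : (∑ m, ∑ n, if (m = k ∧ n = l) then Complex.normSq (T1 φ k l m n) else 0) =
          Complex.normSq (T1 φ k l k l) := sum_ite_pair k l _
      have s2 : (∑ m, ∑ n, if (m = l ∧ n = k) then Complex.normSq (T1 φ k l m n) else 0) =
          Complex.normSq (T1 φ k l l k) := sum_ite_pair l k _
      have s3 : (∑ m, ∑ n, if ((m = k ∧ n = l) ∧ (m = l ∧ n = k)) then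
          Complex.normSq (T1 φ k l m n) else 0) =
          (if k = l then Complex.normSq (T1 φ k l k l) else 0) := by
        by_cases hkl : k = l
        · subst hkl
          rw [if_pos rfl]
          simp only [and_self]
          exact sum_ite_pair k k _
        · rw [if_neg hkl]
          apply Finset.sum_eq_zero; intro m _
          apply Finset.sum_eq_zero; intro n _
          rw [if_neg]
          rintro ⟨⟨rfl, rfl⟩, h3, _⟩
          exact hkl h3
      rw [s1, s2, s3]
    simp only [hsplit]
    simp only [Finset.sum_sub_distrib, Finset.sum_add_distrib]
    have h3 : (∑ k, ∑ l, if k = l then Complex.normSq (T1 φ k l k l) else 0) =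
        ∑ k, Complex.normSq (T1 φ k k k k) := by
      refine Finset.sum_congr rfl fun k _ => ?_
      rw [Finset.sum_ite_eq]
      simp
    have h4 : (∑ k, Complex.normSq (T1 φ k k k k)) =
        ∑ k, ((1/2) * ((Matrix.trace (rhoA dA dB (φ k) * rhoA dA dB (φ k))).re)^2 +
          (1/2) * ((Matrix.trace (rhoB dA dB (φ k) * rhoB dA dB (φ k))).re)^2) :=
      Finset.sum_congr rfl fun k _ => hDk k
    rw [h3, h4]
    simp only [hAkl, hBkl]
    rw [Finset.sum_add_distrib, ← Finset.mul_sum, ← Finset.mul_sum]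
    ring
  rw [← hval]
  exact hmain
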